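/- If f(z) = Σ_{n≥0} a_n z^n is analytic on the unit disk with |f(z)| ≤ 1 for all |z| < 1, then for every r with 0 ≤ r ≤ 1/3, the inequality Σ_{n≥0} |a_n| r^n ≤ 1 holds. -/

import Mathlib

open Metric Complex Finset


lemma schwarz_pick_zero (h : ℂ → ℂ) (hd : DifferentiableOn ℂ h (ball (0:ℂ) 1))
    (hb : ∀ w ∈ ball (0:ℂ) 1, ‖h w‖ ≤ 1) :
    ‖deriv h 0‖ ≤ 1 - ‖h 0‖ ^ 2 := by
  have h0m : (0:ℂ) ∈ ball (0:ℂ) 1 := by simp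
  set c := h 0 with hc
  have hc1 : ‖c‖ ≤ 1 := hb 0 h0m
  rcases eq_or_lt_of_le hc1 with hceq | hclt
  · -- maximum modulus: h is constant
    have hmax : IsMaxOn (norm ∘ h) (ball (0:ℂ) 1) 0 := by
      intro w hw
      simp only [Function.comp_apply, Set.mem_setOf_eq, ← hc]
      rw [show ‖h 0‖ = 1 from hceq]
      exact hb w hw
    have heq := Complex.eqOn_of_isPreconnected_of_isMaxOn_norm
      (convex_ball (0:ℂ) 1).isPreconnected isOpen_ball hd h0m hmax
    have hev : h =ᶠ[nhds (0:ℂ)] (fun _ => c) := by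
      filter_upwards [isOpen_ball.mem_nhds h0m] with x hx
      exact heq hx
    have : deriv h 0 = deriv (fun _ : ℂ => c) 0 := Filter.EventuallyEq.deriv_eq hev
    rw [this, deriv_const]
    simp only [norm_zero]
    nlinarith [hceq]
  · -- Möbius transform + Schwarz lemma
    set g : ℂ → ℂ := fun w => (h w - c) / (1 - (starRingEnd ℂ) c * h w) with hg
    have hnsqc : Complex.normSq c < 1 := by
      rw [Complex.normSq_eq_norm_sq]
      nlinarith [hclt, norm_nonneg c]
    have hden : ∀ w ∈ ball (0:ℂ) 1, (1 - (starRingEnd ℂ) c * h w) ≠ 0 := by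
      intro w hw hzero
      have h1 : ‖(starRingEnd ℂ) c * h w‖ < 1 := by
        rw [norm_mul, RCLike.norm_conj]
        nlinarith [norm_nonneg (h w), norm_nonneg c, hb w hw, hclt]
      have : (1:ℂ) = (starRingEnd ℂ) c * h w := by linear_combination hzero
      rw [← this] at h1; simp at h1
    have hgd : DifferentiableOn ℂ g (ball (0:ℂ) 1) :=
      DifferentiableOn.div (hd.sub (differentiableOn_const c))
        ((differentiableOn_const 1).sub ((differentiableOn_const _).mul hd)) hden
    -- key normSq identity
    have hid : ∀ H : ℂ, Complex.normSq (1 - (starRingEnd ℂ) c * H) - Complex.normSq (H - c)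
        = (1 - Complex.normSq c) * (1 - Complex.normSq H) := by
      intro H
      have e : ((Complex.normSq (1 - (starRingEnd ℂ) c * H) : ℂ)) - (Complex.normSq (H - c) : ℂ)
          = ((1:ℂ) - (Complex.normSq c : ℂ)) * ((1:ℂ) - (Complex.normSq H : ℂ)) := by
        rw [← Complex.mul_conj, ← Complex.mul_conj, ← Complex.mul_conj, ← Complex.mul_conj]
        simp only [map_sub, map_mul, map_one, Complex.conj_conj]
        ring
      exact_mod_cast e
    have hgb : ∀ w ∈ ball (0:ℂ) 1, ‖g w‖ ≤ 1 := by
      intro w hw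
      have hden' := hden w hw
      have hHle : Complex.normSq (h w) ≤ 1 := by
        rw [Complex.normSq_eq_norm_sq]
        nlinarith [hb w hw, norm_nonneg (h w)]
      have hnum : ‖h w - c‖ ≤ ‖1 - (starRingEnd ℂ) c * h w‖ := by
        have h2 : Complex.normSq (h w - c) ≤ Complex.normSq (1 - (starRingEnd ℂ) c * h w) := by
          nlinarith [hid (h w), hnsqc, hHle]
        have h3 := Real.sqrt_le_sqrt h2
        rwa [← Complex.norm_def, ← Complex.norm_def] at h3
      rw [hg]
      simp only [norm_div]
      rw [div_le_one (norm_pos_iff.mpr hden')]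
      exact hnum
    have hg0 : g 0 = 0 := by simp [hg, ← hc]
    -- derivative of g at 0
    have hh0 : HasDerivAt h (deriv h 0) 0 :=
      (hd.differentiableAt (isOpen_ball.mem_nhds h0m)).hasDerivAt
    have hv0 : (1 : ℂ) - (starRingEnd ℂ) c * h 0 ≠ 0 := hden 0 h0m
    have hnsC : ((1:ℂ) - (Complex.normSq c : ℂ)) ≠ 0 := by
      intro hz
      have h4 : (1:ℂ) = (Complex.normSq c : ℂ) := by linear_combination hz
      have h5 := congrArg Complex.re h4
      simp at h5
      linarith
    have hgderiv : HasDerivAt g (deriv h 0 / (1 - (Complex.normSq c : ℂ))) 0 := by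
      have hu : HasDerivAt (fun w => h w - c) (deriv h 0) 0 := hh0.sub_const c
      have hv : HasDerivAt (fun w => 1 - (starRingEnd ℂ) c * h w)
          (-((starRingEnd ℂ) c * deriv h 0)) 0 := (hh0.const_mul _).const_sub 1
      have := hu.div hv hv0
      refine this.congr_deriv ?_
      have hc' : (starRingEnd ℂ) c * c = (Complex.normSq c : ℂ) := by
        rw [mul_comm, Complex.mul_conj]
      rw [← hc, hc']
      field_simp
      ring
    -- Schwarz lemma
    have hsch : ‖deriv g 0‖ ≤ 1 := by
      apply le_of_forall_pos_le_add
      intro ε hε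
      have hmaps : Set.MapsTo g (ball (0:ℂ) 1) (ball (g 0) (1 + ε)) := by
        intro w hw
        rw [mem_ball, dist_eq_norm, hg0, sub_zero]
        exact lt_of_le_of_lt (hgb w hw) (by linarith)
      have := Complex.norm_deriv_le_div_of_mapsTo_ball hgd (hmaps.mono_right ball_subset_closedBall) one_pos
      calc ‖deriv g 0‖ ≤ (1 + ε) / 1 := this
        _ = 1 + ε := by ring
    rw [hgderiv.deriv] at hsch
    rw [norm_div] at hsch
    have hnormden : ‖(1:ℂ) - (Complex.normSq c : ℂ)‖ = 1 - Complex.normSq c := by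
      rw [show (1:ℂ) - (Complex.normSq c : ℂ) = ((1 - Complex.normSq c : ℝ) : ℂ) by push_cast; ring]
      rw [Complex.norm_real, Real.norm_of_nonneg (by linarith)]
    rw [hnormden, div_le_one (by linarith)] at hsch
    have hns : Complex.normSq c = ‖c‖ ^ 2 := by
      rw [Complex.normSq_eq_norm_sq]
    rw [hns] at hsch
    exact hsch


lemma bohr_coeff (f : ℂ → ℂ) (a : ℕ → ℂ)
    (hf : ∀ z : ℂ, ‖z‖ < 1 → HasSum (fun k : ℕ => a k * z ^ k) (f z))
    (hbd : ∀ z : ℂ, ‖z‖ < 1 → ‖f z‖ ≤ 1)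
    (n : ℕ) (hn : 1 ≤ n)
    (SP : ∀ h : ℂ → ℂ, DifferentiableOn ℂ h (ball (0:ℂ) 1) →
      (∀ w ∈ ball (0:ℂ) 1, ‖h w‖ ≤ 1) → ‖deriv h 0‖ ≤ 1 - ‖h 0‖ ^ 2) :
    ‖a n‖ ≤ 1 - ‖a 0‖ ^ 2 := by
  have hn0 : (n:ℝ) ≠ 0 := by positivity
  have hnC : (n:ℂ) ≠ 0 := Nat.cast_ne_zero.mpr (by omega)
  -- coefficient growth bound
  have hC : ∀ ρ : ℝ, 0 < ρ → ρ < 1 → ∃ C : ℝ, ∀ k, ‖a k‖ * ρ ^ k ≤ C := by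
    intro ρ h0 h1
    have hs : Summable (fun k => a k * (ρ:ℂ) ^ k) := by
      refine (hf (ρ:ℂ) ?_).summable
      rwa [Complex.norm_real, Real.norm_of_nonneg h0.le]
    have ht : Filter.Tendsto (fun k => ‖a k * (ρ:ℂ) ^ k‖) Filter.atTop (nhds 0) := by
      simpa using hs.tendsto_atTop_zero.norm
    obtain ⟨C, hC⟩ := ht.bddAbove_range
    refine ⟨C, fun k => ?_⟩
    have := hC (Set.mem_range_self k)
    rwa [norm_mul, norm_pow, Complex.norm_real, Real.norm_of_nonneg h0.le] at this
  set b : ℕ → ℂ := fun m => a (n * m) with hb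
  set P := FormalMultilinearSeries.ofScalars ℂ b with hP
  -- radius at least 1
  have hrad : 1 ≤ P.radius := by
    apply ENNReal.le_of_forall_nnreal_lt
    intro s hs
    have hs1 : (s:ℝ) < 1 := by exact_mod_cast hs
    set x : ℝ := max (s:ℝ) (1/2) with hx
    have hx0 : 0 < x := lt_max_of_lt_right (by norm_num)
    have hx1 : x < 1 := max_lt hs1 (by norm_num)
    set ρ : ℝ := x ^ ((n:ℝ)⁻¹) with hρ
    have hρ0 : 0 < ρ := Real.rpow_pos_of_pos hx0 _
    have hρ1 : ρ < 1 := Real.rpow_lt_one hx0.le hx1 (by positivity)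
    have hρn : ρ ^ n = x := by
      rw [hρ, ← Real.rpow_natCast (x ^ ((n:ℝ)⁻¹)) n, ← Real.rpow_mul hx0.le,
        inv_mul_cancel₀ hn0, Real.rpow_one]
    obtain ⟨C, hC⟩ := hC ρ hρ0 hρ1
    apply P.le_radius_of_bound C
    intro m
    rw [hP, FormalMultilinearSeries.ofScalars_norm]
    calc ‖b m‖ * (s:ℝ) ^ m ≤ ‖b m‖ * x ^ m := by
          apply mul_le_mul_of_nonneg_left (pow_le_pow_left₀ s.coe_nonneg (le_max_left _ _) m)
            (norm_nonneg _)
      _ = ‖a (n * m)‖ * ρ ^ (n * m) := by rw [hb, pow_mul, hρn]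
      _ ≤ C := hC (n * m)
  have hr0 : (0:ENNReal) < P.radius := lt_of_lt_of_le one_pos hrad
  have HB : HasFPowerSeriesOnBall P.sum P 0 1 :=
    (P.hasFPowerSeriesOnBall hr0).mono one_pos hrad
  have hball : Metric.eball (0:ℂ) 1 = ball (0:ℂ) 1 := by
    rw [show (1:ENNReal) = ((1:NNReal):ENNReal) by norm_num, Metric.emetric_ball_nnreal]
    norm_num
  have hd : DifferentiableOn ℂ P.sum (ball (0:ℂ) 1) := hball ▸ HB.differentiableOn
  have hsum : ∀ w : ℂ, ‖w‖ < 1 → HasSum (fun m => b m * w ^ m) (P.sum w) := by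
    intro w hw
    have hmem : w ∈ Metric.eball (0:ℂ) 1 := by
      rw [mem_emetric_ball_zero_iff]
      rw [enorm_eq_nnnorm]
      exact_mod_cast (show ‖w‖₊ < 1 by rw [← NNReal.coe_lt_coe]; simpa using hw)
    have := HB.hasSum hmem
    rw [zero_add] at this
    simpa only [hP, FormalMultilinearSeries.ofScalars_apply_eq, smul_eq_mul] using this
  -- boundedness of P.sum via averaging over roots of unity
  have hmb : ∀ w ∈ ball (0:ℂ) 1, ‖P.sum w‖ ≤ 1 := by
    intro w hw
    rw [mem_ball, dist_zero_right] at hw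
    obtain ⟨z, hz⟩ : ∃ z : ℂ, z ^ n = w := IsAlgClosed.exists_pow_nat_eq w (by omega)
    have hzn : ‖z‖ < 1 := by
      by_contra hzc
      push_neg at hzc
      have : (1:ℝ) ≤ ‖z‖ ^ n := one_le_pow₀ hzc
      rw [← norm_pow, hz] at this
      linarith
    set ω : ℂ := Complex.exp (2 * Real.pi * Complex.I / n) with hω
    have hprim := Complex.isPrimitiveRoot_exp n (by omega)
    have hωn : ω ^ n = 1 := hprim.pow_eq_one
    have hωnorm : ‖ω‖ = 1 := by
      rw [hω, Complex.norm_exp]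
      have hre : (2 * (Real.pi:ℂ) * Complex.I / (n:ℂ)).re = 0 := by
        simp [Complex.div_re]
      rw [hre, Real.exp_zero]
    set S : ℂ := (n:ℂ)⁻¹ * ∑ j ∈ range n, f (ω ^ j * z) with hS
    have hSsum : HasSum (fun k => if n ∣ k then a k * z ^ k else 0) S := by
      have h1 : ∀ j ∈ range n, HasSum (fun k => a k * (ω ^ j * z) ^ k) (f (ω ^ j * z)) := by
        intro j _
        apply hf
        rw [norm_mul, norm_pow, hωnorm, one_pow, one_mul]
        exact hzn
      have h2 := (hasSum_sum h1).mul_left ((n:ℂ)⁻¹)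
      refine h2.congr_fun ?_
      intro k
      have h3 : ∀ j, a k * (ω ^ j * z) ^ k = a k * z ^ k * ((ω ^ k) ^ j) := by
        intro j
        rw [mul_pow, pow_right_comm]
        ring
      simp only [h3, ← Finset.mul_sum]
      by_cases hdvd : n ∣ k
      · rw [if_pos hdvd]
        have : ω ^ k = 1 := (hprim.pow_eq_one_iff_dvd k).mpr hdvd
        rw [this]
        simp [Finset.sum_const, hnC]
        field_simp
      · rw [if_neg hdvd]
        have hne : ω ^ k ≠ 1 := fun h => hdvd ((hprim.pow_eq_one_iff_dvd k).mp h)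
        rw [geom_sum_eq hne n, pow_right_comm, hωn, one_pow]
        simp
    have hinj : Function.Injective (fun m : ℕ => n * m) :=
      fun p q h => Nat.eq_of_mul_eq_mul_left (by omega) h
    have hsupp : ∀ k ∉ Set.range (fun m : ℕ => n * m),
        (if n ∣ k then a k * z ^ k else 0) = 0 := by
      intro k hk
      rw [if_neg]
      intro ⟨c, hc⟩
      exact hk ⟨c, hc.symm⟩
    have h6 := (hinj.hasSum_iff hsupp).mpr hSsum
    have h7 : HasSum (fun m => b m * w ^ m) S := by
      convert h6 using 1
      funext m
      simp only [Function.comp_apply, hb]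
      rw [if_pos ⟨m, rfl⟩, pow_mul, hz]
    have heq : P.sum w = S := (hsum w hw).unique h7
    rw [heq, hS, norm_mul, norm_inv, Complex.norm_natCast]
    calc (n:ℝ)⁻¹ * ‖∑ j ∈ range n, f (ω ^ j * z)‖
        ≤ (n:ℝ)⁻¹ * ∑ j ∈ range n, ‖f (ω ^ j * z)‖ := by
          apply mul_le_mul_of_nonneg_left (norm_sum_le _ _) (by positivity)
      _ ≤ (n:ℝ)⁻¹ * ∑ j ∈ range n, 1 := by
          apply mul_le_mul_of_nonneg_left _ (by positivity)
          apply Finset.sum_le_sum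
          intro j _
          apply hbd
          rw [norm_mul, norm_pow, hωnorm, one_pow, one_mul]
          exact hzn
      _ = 1 := by
          simp
          rw [inv_mul_cancel₀ hn0]
  -- identify value and derivative at 0
  have h0 : P.sum 0 = a 0 := by
    have := HB.coeff_zero (fun _ => 0)
    rw [← this, hP]
    have := FormalMultilinearSeries.ofScalars_apply_eq (E := ℂ) b (0:ℂ) 0
    simpa [hb] using this
  have hderiv : deriv P.sum 0 = a n := by
    rw [HB.hasFPowerSeriesAt.deriv, hP]
    have := FormalMultilinearSeries.ofScalars_apply_eq (E := ℂ) b (1:ℂ) 1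
    simpa [hb] using this
  have := SP P.sum hd hmb
  rwa [h0, hderiv] at this


/-- Classical Bohr inequality: if `f = Σ aₙ zⁿ` is analytic on the unit disk with
`|f| ≤ 1`, then `Σ |aₙ| rⁿ ≤ 1` for `0 ≤ r ≤ 1/3`. -/
theorem bohr_inequality (f : ℂ → ℂ) (a : ℕ → ℂ)
    (hf : ∀ z : ℂ, ‖z‖ < 1 → HasSum (fun n : ℕ => a n * z ^ n) (f z))
    (hb : ∀ z : ℂ, ‖z‖ < 1 → ‖f z‖ ≤ 1)
    (r : ℝ) (hr0 : 0 ≤ r) (hr : r ≤ 1 / 3) :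
    ∑' n : ℕ, ‖a n‖ * r ^ n ≤ 1 := by
  have ha0 : f 0 = a 0 := by
    have h1 := hf 0 (by norm_num)
    have h2 : HasSum (fun k : ℕ => a k * (0:ℂ) ^ k) (a 0) := by
      have := hasSum_single (f := fun k : ℕ => a k * (0:ℂ) ^ k) 0
        (fun k hk => by simp [zero_pow hk])
      simpa using this
    exact h1.unique h2
  obtain ⟨t, ht⟩ : ∃ t : ℝ, ‖a 0‖ = t := ⟨_, rfl⟩
  have ht1 : t ≤ 1 := by rw [← ht, ← ha0]; exact hb 0 (by norm_num)
  have ht0 : 0 ≤ t := ht ▸ norm_nonneg _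
  have hK : ∀ k : ℕ, 1 ≤ k → ‖a k‖ ≤ 1 - t ^ 2 :=
    fun k hk => ht ▸ bohr_coeff f a hf hb k hk schwarz_pick_zero
  have hle1 : ∀ k : ℕ, ‖a k‖ ≤ 1 := by
    intro k
    rcases Nat.eq_zero_or_pos k with h | h
    · rw [h, ht]; exact ht1
    · calc ‖a k‖ ≤ 1 - t ^ 2 := hK k h
        _ ≤ 1 := by nlinarith
  have hr1 : r < 1 := by linarith
  have hsummable : Summable (fun k : ℕ => ‖a k‖ * r ^ k) := by
    apply Summable.of_nonneg_of_le (fun k => by positivity)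
      (fun k => ?_) (summable_geometric_of_lt_one hr0 hr1)
    calc ‖a k‖ * r ^ k ≤ 1 * r ^ k := by
          apply mul_le_mul_of_nonneg_right (hle1 k) (by positivity)
      _ = r ^ k := one_mul _
  rw [Summable.tsum_eq_zero_add hsummable]
  have htail : ∑' k : ℕ, ‖a (k + 1)‖ * r ^ (k + 1) ≤ (1 - t ^ 2) * (r * (1 - r)⁻¹) := by
    have hgeo0 : Summable (fun k : ℕ => r ^ (k + 1)) :=
      (summable_nat_add_iff 1).mpr (summable_geometric_of_lt_one hr0 hr1)
    have hgeo : Summable (fun k : ℕ => (1 - t ^ 2) * r ^ (k + 1)) :=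
      hgeo0.mul_left (1 - t ^ 2)
    have hs1 : Summable (fun k : ℕ => ‖a (k + 1)‖ * r ^ (k + 1)) := by
      exact_mod_cast (summable_nat_add_iff 1).mpr hsummable
    calc ∑' k : ℕ, ‖a (k + 1)‖ * r ^ (k + 1)
        ≤ ∑' k : ℕ, (1 - t ^ 2) * r ^ (k + 1) := by
          apply Summable.tsum_le_tsum _ hs1 hgeo
          intro k
          exact mul_le_mul_of_nonneg_right (hK (k + 1) (by omega)) (by positivity)
      _ = (1 - t ^ 2) * ∑' k : ℕ, r ^ (k + 1) := tsum_mul_left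
      _ = (1 - t ^ 2) * (r * (1 - r)⁻¹) := by
          congr 1
          rw [show (fun k : ℕ => r ^ (k + 1)) = fun k : ℕ => r * r ^ k by
            funext k; ring]
          rw [tsum_mul_left, tsum_geometric_of_lt_one hr0 hr1]
  have hhalf : r * (1 - r)⁻¹ ≤ 1 / 2 := by
    rw [mul_inv_le_iff₀ (by linarith)]
    linarith
  have h2 : (1 - t ^ 2) * (r * (1 - r)⁻¹) ≤ (1 - t ^ 2) * (1 / 2) := by
    apply mul_le_mul_of_nonneg_left hhalf (by nlinarith)
  have : ‖a 0‖ * r ^ 0 = t := by simp [ht]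
  rw [this]
  nlinarith [htail, h2]
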